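/- Let N be an absolute normalized norm on ℝ². Then (ℝ², N) is positively octahedral if and only if there is a positive (c,d) ∈ ℝ² with N(c,d) = 1 such that N((1,0)+(c,d)) = 2 and N((0,1)+(c,d)) = 2. -/
import Mathlib


noncomputable section

/-- An absolute normalized norm on `ℝ²`. -/
structure AbsoluteNormalizedNorm where
  toFun : ℝ × ℝ → ℝ
  add_le : ∀ u v : ℝ × ℝ, toFun (u + v) ≤ toFun u + toFun v
  smul_eq : ∀ (r : ℝ) (u : ℝ × ℝ), toFun (r • u) = |r| * toFun u
  eq_zero : ∀ u : ℝ × ℝ, toFun u = 0 → u = 0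
  absolute : ∀ a b : ℝ, toFun (a, b) = toFun (|a|, |b|)
  norm_one_zero : toFun (1, 0) = 1
  norm_zero_one : toFun (0, 1) = 1

/-- `(ℝ², N)` is positively octahedral: for any finite family of positive norm-one
elements there is a positive norm-one `(c,d)` with `N((aᵢ,bᵢ)+(c,d)) = 2` for all `i`. -/
lemma AbsoluteNormalizedNorm.cone_add (N : AbsoluteNormalizedNorm) (p q : ℝ × ℝ)
    (h : N.toFun (p + q) = N.toFun p + N.toFun q) :
    ∀ α β : ℝ, 0 ≤ α → 0 ≤ β →
      N.toFun (α • p + β • q) = α * N.toFun p + β * N.toFun q := by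
  have core : ∀ (p q : ℝ × ℝ), N.toFun (p + q) = N.toFun p + N.toFun q →
      ∀ α β : ℝ, 0 ≤ β → β ≤ α →
      N.toFun (α • p + β • q) = α * N.toFun p + β * N.toFun q := by
    intro p q h α β hβ hβα
    have hα : 0 ≤ α := le_trans hβ hβα
    have hup : N.toFun (α • p + β • q) ≤ α * N.toFun p + β * N.toFun q := by
      have := N.add_le (α • p) (β • q)
      rw [N.smul_eq, N.smul_eq, abs_of_nonneg hα, abs_of_nonneg hβ] at this
      exact this
    have hid : α • (p + q) = (α • p + β • q) + (α - β) • q := by module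
    have hlow : α * N.toFun (p + q) ≤ N.toFun (α • p + β • q) + (α - β) * N.toFun q := by
      have h1 : N.toFun (α • (p + q)) = α * N.toFun (p + q) := by
        rw [N.smul_eq, abs_of_nonneg hα]
      have h2 := N.add_le (α • p + β • q) ((α - β) • q)
      rw [N.smul_eq, abs_of_nonneg (by linarith : (0:ℝ) ≤ α - β)] at h2
      rw [← h1, hid]
      exact h2
    rw [h] at hlow
    nlinarith [hlow, hup]
  intro α β hα hβ
  rcases le_total β α with hle | hle
  · exact core p q h α β hβ hle
  · have h' : N.toFun (q + p) = N.toFun q + N.toFun p := by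
      rw [add_comm q p, h]; ring
    have := core q p h' β α hα hle
    rw [add_comm (β • q)] at this
    rw [this]; ring

lemma AbsoluteNormalizedNorm.zero (N : AbsoluteNormalizedNorm) : N.toFun 0 = 0 := by
  have := N.smul_eq 0 0
  simpa using this

lemma key1 (N : AbsoluteNormalizedNorm) (v : ℝ × ℝ) (hd : 0 < v.2)
    (hv : N.toFun v = 1) (h1 : N.toFun ((1, 0) + v) = 2)
    (u : ℝ × ℝ) (ha : 0 ≤ u.1) (hb : 0 ≤ u.2) (hu : N.toFun u = 1)
    (hord : u.2 * v.1 ≤ u.1 * v.2) : N.toFun (u + v) = 2 := by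
  set a := u.1; set b := u.2; set c := v.1; set d := v.2
  have hd' : d ≠ 0 := ne_of_gt hd
  set α : ℝ := a - b * c / d with hα_def
  set β : ℝ := (b + d) / d with hβ_def
  have hα : 0 ≤ α := by
    rw [hα_def, sub_nonneg, div_le_iff₀ hd]
    linarith
  have hβ : 1 ≤ β := by
    rw [hβ_def, le_div_iff₀ hd]
    linarith
  have hpair : N.toFun ((1, 0) + v) = N.toFun ((1, 0) : ℝ × ℝ) + N.toFun v := by
    rw [h1, N.norm_one_zero, hv]; norm_num
  have hid1 : u + v = α • ((1, 0) : ℝ × ℝ) + β • v := by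
    have : u = (a, b) := rfl
    have hv' : v = (c, d) := rfl
    rw [this, hv', Prod.ext_iff]
    constructor <;> simp [hα_def, hβ_def] <;> field_simp <;> ring
  have hid2 : u = α • ((1, 0) : ℝ × ℝ) + (β - 1) • v := by
    have : u = (a, b) := rfl
    have hv' : v = (c, d) := rfl
    rw [this, hv', Prod.ext_iff]
    constructor <;> simp [hα_def, hβ_def] <;> field_simp <;> ring
  have e1 : N.toFun (u + v) = α + β := by
    rw [hid1, N.cone_add _ _ hpair α β hα (by linarith), N.norm_one_zero, hv]; ring
  have e2 : (1 : ℝ) = α + (β - 1) := by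
    have := N.cone_add _ _ hpair α (β - 1) hα (by linarith)
    rw [← hid2, hu, N.norm_one_zero, hv] at this
    linarith
  rw [e1]; linarith

lemma key2 (N : AbsoluteNormalizedNorm) (v : ℝ × ℝ) (hc : 0 < v.1)
    (hv : N.toFun v = 1) (h2 : N.toFun ((0, 1) + v) = 2)
    (u : ℝ × ℝ) (ha : 0 ≤ u.1) (hb : 0 ≤ u.2) (hu : N.toFun u = 1)
    (hord : u.1 * v.2 ≤ u.2 * v.1) : N.toFun (u + v) = 2 := by
  set a := u.1; set b := u.2; set c := v.1; set d := v.2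
  have hc' : c ≠ 0 := ne_of_gt hc
  set α : ℝ := b - a * d / c with hα_def
  set β : ℝ := (a + c) / c with hβ_def
  have hα : 0 ≤ α := by
    rw [hα_def, sub_nonneg, div_le_iff₀ hc]
    linarith
  have hβ : 1 ≤ β := by
    rw [hβ_def, le_div_iff₀ hc]
    linarith
  have hpair : N.toFun ((0, 1) + v) = N.toFun ((0, 1) : ℝ × ℝ) + N.toFun v := by
    rw [h2, N.norm_zero_one, hv]; norm_num
  have hid1 : u + v = α • ((0, 1) : ℝ × ℝ) + β • v := by
    have : u = (a, b) := rfl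
    have hv' : v = (c, d) := rfl
    rw [this, hv', Prod.ext_iff]
    constructor <;> simp [hα_def, hβ_def] <;> field_simp <;> ring
  have hid2 : u = α • ((0, 1) : ℝ × ℝ) + (β - 1) • v := by
    have : u = (a, b) := rfl
    have hv' : v = (c, d) := rfl
    rw [this, hv', Prod.ext_iff]
    constructor <;> simp [hα_def, hβ_def] <;> field_simp <;> ring
  have e1 : N.toFun (u + v) = α + β := by
    rw [hid1, N.cone_add _ _ hpair α β hα (by linarith), N.norm_zero_one, hv]; ring
  have e2 : (1 : ℝ) = α + (β - 1) := by
    have := N.cone_add _ _ hpair α (β - 1) hα (by linarith)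
    rw [← hid2, hu, N.norm_zero_one, hv] at this
    linarith
  rw [e1]; linarith

lemma key (N : AbsoluteNormalizedNorm) (v : ℝ × ℝ) (hc : 0 ≤ v.1) (hd : 0 ≤ v.2)
    (hv : N.toFun v = 1) (h1 : N.toFun ((1, 0) + v) = 2) (h2 : N.toFun ((0, 1) + v) = 2)
    (u : ℝ × ℝ) (ha : 0 ≤ u.1) (hb : 0 ≤ u.2) (hu : N.toFun u = 1) :
    N.toFun (u + v) = 2 := by
  have hvne : v ≠ 0 := by
    intro h
    rw [h, N.zero] at hv
    norm_num at hv
  by_cases hc0 : v.1 = 0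
  · have hdpos : 0 < v.2 := by
      rcases lt_or_eq_of_le hd with h | h
      · exact h
      · exfalso; exact hvne (Prod.ext_iff.mpr ⟨hc0, h.symm⟩)
    exact key1 N v hdpos hv h1 u ha hb hu (by rw [hc0]; nlinarith)
  · have hcpos : 0 < v.1 := lt_of_le_of_ne hc (Ne.symm hc0)
    by_cases hd0 : v.2 = 0
    · exact key2 N v hcpos hv h2 u ha hb hu (by rw [hd0]; nlinarith)
    · have hdpos : 0 < v.2 := lt_of_le_of_ne hd (Ne.symm hd0)
      rcases le_total (u.2 * v.1) (u.1 * v.2) with hle | hle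
      · exact key1 N v hdpos hv h1 u ha hb hu hle
      · exact key2 N v hcpos hv h2 u ha hb hu hle

def PositivelyOctahedral (M : ℝ × ℝ → ℝ) : Prop :=
  ∀ n : ℕ, 0 < n → ∀ u : Fin n → ℝ × ℝ,
    (∀ i, 0 ≤ (u i).1 ∧ 0 ≤ (u i).2 ∧ M (u i) = 1) →
    ∃ v : ℝ × ℝ, 0 ≤ v.1 ∧ 0 ≤ v.2 ∧ M v = 1 ∧ ∀ i, M (u i + v) = 2

/-- `(ℝ², N)` is positively octahedral iff there is a positive norm-one `(c,d)` with
`N((1,0)+(c,d)) = 2` and `N((0,1)+(c,d)) = 2`. -/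
theorem positivelyOctahedral_iff (N : AbsoluteNormalizedNorm) :
    PositivelyOctahedral N.toFun ↔
      ∃ v : ℝ × ℝ, 0 ≤ v.1 ∧ 0 ≤ v.2 ∧ N.toFun v = 1 ∧
        N.toFun ((1, 0) + v) = 2 ∧ N.toFun ((0, 1) + v) = 2 := by
  constructor
  · intro h
    obtain ⟨v, h1, h2, h3, h4⟩ := h 2 (by norm_num) ![(1, 0), (0, 1)] (by
      intro i
      fin_cases i <;> simp [N.norm_one_zero, N.norm_zero_one])
    exact ⟨v, h1, h2, h3, by simpa using h4 0, by simpa using h4 1⟩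
  · rintro ⟨v, hc, hd, hv, h1, h2⟩ n hn u hu
    exact ⟨v, hc, hd, hv, fun i => key N v hc hd hv h1 h2 (u i) (hu i).1 (hu i).2.1 (hu i).2.2⟩
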